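/- Under the assumptions of the previous identity, the PITC posterior covariance equals the decentralized form: Σ_YY − Γ_YD (Γ_DD + Λ)⁻¹ Γ_DY = Σ_YY − Σ_YU (Σ_UU⁻¹ − Σ̈_UU⁻¹) Σ_UY, where Γ_DY = Γ_YDᵀ and Σ_UY = Σ_YUᵀ. -/

import Mathlib

open Matrix

/-- Theorem 1B (covariance part) of the D²FAS paper: the PITC posterior covariance equals
the decentralized form,
`Σ_YY − Γ_YD (Γ_DD + Λ)⁻¹ Γ_DY = Σ_YY − Σ_YU (Σ_UU⁻¹ − Σ̈_UU⁻¹) Σ_UY`. -/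
theorem pitc_covariance_equivalence {u d y : ℕ}
    (SUU : Matrix (Fin u) (Fin u) ℝ) (SUD : Matrix (Fin u) (Fin d) ℝ)
    (SYU : Matrix (Fin y) (Fin u) ℝ) (SYY : Matrix (Fin y) (Fin y) ℝ)
    (Λ : Matrix (Fin d) (Fin d) ℝ)
    (hSym : SUU.IsSymm)
    (hSUU : IsUnit SUU.det) (hΛ : IsUnit Λ.det)
    (hdd : IsUnit (SUU + SUD * Λ⁻¹ * SUDᵀ).det)
    (hΓΛ : IsUnit (SUDᵀ * SUU⁻¹ * SUD + Λ).det) :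
    SYY - (SYU * SUU⁻¹ * SUD) * (SUDᵀ * SUU⁻¹ * SUD + Λ)⁻¹ * (SYU * SUU⁻¹ * SUD)ᵀ =
      SYY - SYU * (SUU⁻¹ - (SUU + SUD * Λ⁻¹ * SUDᵀ)⁻¹) * SYUᵀ := by
  have hΛinv : (Λ⁻¹)⁻¹ = Λ := Matrix.nonsing_inv_nonsing_inv _ hΛ
  have hΛinvdet : IsUnit Λ⁻¹.det := by
    rw [Matrix.det_nonsing_inv]
    simpa using hΛ.unit.isUnit.inv.map (RingHom.id ℝ)
  have hcomm : Λ + SUDᵀ * SUU⁻¹ * SUD = SUDᵀ * SUU⁻¹ * SUD + Λ := add_comm _ _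
  have hW : (SUU + SUD * Λ⁻¹ * SUDᵀ)⁻¹ =
      SUU⁻¹ - SUU⁻¹ * SUD * (SUDᵀ * SUU⁻¹ * SUD + Λ)⁻¹ * SUDᵀ * SUU⁻¹ := by
    have := Matrix.add_mul_mul_inv_eq_sub SUU SUD Λ⁻¹ SUDᵀ
      ((Matrix.isUnit_iff_isUnit_det _).2 hSUU)
      ((Matrix.isUnit_iff_isUnit_det _).2 hΛinvdet)
      (by rw [hΛinv, hcomm]; exact (Matrix.isUnit_iff_isUnit_det _).2 hΓΛ)
    rwa [hΛinv, hcomm] at this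
  have hSinv : SUU⁻¹ᵀ = SUU⁻¹ := by
    rw [show SUU⁻¹ᵀ = (SUUᵀ)⁻¹ from Matrix.transpose_nonsing_inv SUU, hSym.eq]
  rw [hW]
  have : (SYU * SUU⁻¹ * SUD)ᵀ = SUDᵀ * SUU⁻¹ * SYUᵀ := by
    simp [Matrix.transpose_mul, hSinv, Matrix.mul_assoc]
  rw [this]
  congr 1
  simp only [Matrix.sub_mul, Matrix.mul_sub, Matrix.sub_mul]
  simp [Matrix.mul_assoc]
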